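/- Let H̃ ∈ ℝ^{n×n} be symmetric, λ > 0, τ ∈ ℝ, and let γ, θ, φ, ψ ∈ ℝ^n have all components strictly positive. Suppose Δz ∈ ℝ^n solves the compact system (2λH̃ + diag(γ/φ) + diag(θ/ψ))Δz = 2(√(θ/ψ)τe − √(γ/φ)τe + γ − θ), and define Δγ = (γ/φ)Δz + 2(√(γ/φ)τe − γ), Δθ = −(θ/ψ)Δz + 2(√(θ/ψ)τe − θ), Δφ = −Δz, Δψ = Δz. Then with v = col(γ,θ), s = col(φ,ψ), Δv = col(Δγ,Δθ), Δs = col(Δφ,Δψ), and Ω = [I,−I], the full Newton system holds: 2λH̃Δz + ΩΔv = 0, ΩᵀΔz + Δs = 0, and √(s/v)Δv + √(v/s)Δs = 2(τe − √(vs)). -/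

import Mathlib

open Matrix

lemma key_aux' (p q z τ : ℝ) (hp : 0 < p) (hq : 0 < q) :
    q / p * (p ^ 2 / q ^ 2 * z + 2 * (p / q * τ - p ^ 2)) + p / q * (-z)
      = 2 * (τ - p * q) := by
  field_simp
  ring

lemma key_aux (a b z τ : ℝ) (ha : 0 < a) (hb : 0 < b) :
    Real.sqrt (b / a) * ((a / b) * z + 2 * (Real.sqrt (a / b) * τ - a))
      + Real.sqrt (a / b) * (-z) = 2 * (τ - Real.sqrt (a * b)) := by
  have ha2 : Real.sqrt a ^ 2 = a := Real.sq_sqrt ha.le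
  have hb2 : Real.sqrt b ^ 2 = b := Real.sq_sqrt hb.le
  have h := key_aux' (Real.sqrt a) (Real.sqrt b) z τ (Real.sqrt_pos.2 ha) (Real.sqrt_pos.2 hb)
  rw [ha2, hb2] at h
  rw [Real.sqrt_div ha.le, Real.sqrt_div hb.le, Real.sqrt_mul ha.le]
  linarith [h]

theorem compact_system_recovers_full_newton {n : ℕ}
    (Htil : Matrix (Fin n) (Fin n) ℝ) (hHtil : Htil.IsSymm)
    (lam : ℝ) (hlam : 0 < lam) (τ : ℝ)
    (γ θ φv ψv : Fin n → ℝ)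
    (hγ : ∀ i, 0 < γ i) (hθ : ∀ i, 0 < θ i)
    (hφ : ∀ i, 0 < φv i) (hψ : ∀ i, 0 < ψv i)
    (Δz : Fin n → ℝ)
    (hΔz : ((2 * lam) • Htil + Matrix.diagonal (fun i => γ i / φv i)
        + Matrix.diagonal (fun i => θ i / ψv i)).mulVec Δz =
      fun i => 2 * (Real.sqrt (θ i / ψv i) * τ - Real.sqrt (γ i / φv i) * τ
        + γ i - θ i))
    (Δγ Δθ Δφ Δψ : Fin n → ℝ)
    (hΔγ : Δγ = fun i => (γ i / φv i) * Δz i + 2 * (Real.sqrt (γ i / φv i) * τ - γ i))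
    (hΔθ : Δθ = fun i => -(θ i / ψv i) * Δz i + 2 * (Real.sqrt (θ i / ψv i) * τ - θ i))
    (hΔφ : Δφ = -Δz) (hΔψ : Δψ = Δz)
    (v s Δv Δs : Fin n ⊕ Fin n → ℝ)
    (hv : v = Sum.elim γ θ) (hs : s = Sum.elim φv ψv)
    (hΔv : Δv = Sum.elim Δγ Δθ) (hΔs : Δs = Sum.elim Δφ Δψ)
    (Ω : Matrix (Fin n) (Fin n ⊕ Fin n) ℝ)
    (hΩ : Ω = Matrix.fromCols (1 : Matrix (Fin n) (Fin n) ℝ)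
      (-(1 : Matrix (Fin n) (Fin n) ℝ))) :
    (2 * lam) • Htil.mulVec Δz + Ω.mulVec Δv = 0 ∧
    Ωᵀ.mulVec Δz + Δs = 0 ∧
    (∀ i, Real.sqrt (s i / v i) * Δv i + Real.sqrt (v i / s i) * Δs i
        = 2 * (τ - Real.sqrt (v i * s i))) := by
  subst hΔγ hΔθ hΔφ hΔψ hv hs hΔv hΔs hΩ
  refine ⟨?_, ?_, ?_⟩
  · funext i
    have h := congrFun hΔz i
    simp only [Matrix.add_mulVec, Matrix.smul_mulVec, Matrix.mulVec_diagonal,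
      Pi.add_apply, Pi.smul_apply, smul_eq_mul] at h
    simp only [Matrix.fromCols_mulVec_sumElim, Matrix.one_mulVec, Matrix.neg_mulVec,
      Matrix.one_mulVec, Pi.add_apply, Pi.neg_apply, Pi.smul_apply, smul_eq_mul,
      Pi.zero_apply]
    linarith
  · funext i
    rw [Matrix.transpose_fromCols]
    cases i <;>
      simp [Matrix.fromRows_mulVec, Matrix.transpose_one, Matrix.transpose_neg,
        Matrix.one_mulVec, Matrix.neg_mulVec]
  · intro i
    cases i with
    | inl i => exact key_aux (γ i) (φv i) (Δψ i) τ (hγ i) (hφ i)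
    | inr i =>
      have h := key_aux (θ i) (ψv i) (-(Δψ i)) τ (hθ i) (hψ i)
      simp only [Sum.elim_inr]
      rw [← h]; ring
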